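/- arXiv:2212.07777 — 2 statements merged into one kernel-verified Lean document; each statement's English description precedes it below -/
import Mathlib

section
/- Let B be a symmetric non-degenerate bilinear form on a finite-dimensional F_q-vector space V, let U ≤ V be a self-orthogonal subspace of dimension r, and let k ≥ r. Then the quotient map π : U^⊥ → U^⊥/U induces a bijection between {C ≤ V : dim C = k, U ≤ C, C self-orthogonal with respect to B} and {C̃ ≤ U^⊥/U : dim C̃ = k − r, C̃ self-orthogonal with respect to B_U}. -/
private theorem stmt6_aux {F V : Type*} [Field F] [AddCommGroup V] [Module F V]
    [FiniteDimensional F V]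
    (B : LinearMap.BilinForm F V) (U W : Submodule F V) (hUW : U ≤ W)
    (hWU : ∀ C : Submodule F V, U ≤ C → C ≤ B.orthogonal C → C ≤ W)
    (r k : ℕ) (hr : Module.finrank F U = r) (hk : r ≤ k)
    (B' : LinearMap.BilinForm F (W ⧸ (U.comap W.subtype)))
    (hB' : ∀ v w : W,
      B' (Submodule.Quotient.mk v) (Submodule.Quotient.mk w) = B (v : V) (w : V)) :
    Set.BijOn
      (fun C : Submodule F V =>
        Submodule.map (U.comap W.subtype).mkQ (C.comap W.subtype))
      {C : Submodule F V | Module.finrank F C = k ∧ U ≤ C ∧ C ≤ B.orthogonal C}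
      {D | Module.finrank F D = k - r ∧ D ≤ B'.orthogonal D} := by
  have hrU' : Module.finrank F (U.comap W.subtype) = r := by
    rw [← hr]; exact (Submodule.comapSubtypeEquivOfLe hUW).finrank_eq
  have hdim : ∀ C' : Submodule F W, U.comap W.subtype ≤ C' →
      Module.finrank F (Submodule.map (U.comap W.subtype).mkQ C') + r
        = Module.finrank F C' := by
    intro C' hC'
    have h1 := LinearMap.finrank_range_add_finrank_ker
      ((U.comap W.subtype).mkQ.comp C'.subtype)
    have hrange : LinearMap.range ((U.comap W.subtype).mkQ.comp C'.subtype)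
        = Submodule.map (U.comap W.subtype).mkQ C' := by
      rw [LinearMap.range_comp, Submodule.range_subtype]
    have hker : LinearMap.ker ((U.comap W.subtype).mkQ.comp C'.subtype)
        = (U.comap W.subtype).comap C'.subtype := by
      rw [LinearMap.ker_comp, Submodule.ker_mkQ]
    have hkr : Module.finrank F ((U.comap W.subtype).comap C'.subtype) = r := by
      rw [← hrU']; exact (Submodule.comapSubtypeEquivOfLe hC').finrank_eq
    rw [hrange, hker, hkr] at h1
    exact h1
  constructor
  · -- MapsTo
    rintro C ⟨hCk, hUC, hCo⟩
    have hCW : C ≤ W := hWU C hUC hCo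
    have hU'C : U.comap W.subtype ≤ C.comap W.subtype := fun x hx => hUC hx
    have hCk' : Module.finrank F (C.comap W.subtype) = k := by
      rw [← hCk]; exact (Submodule.comapSubtypeEquivOfLe hCW).finrank_eq
    refine ⟨?_, ?_⟩
    · show Module.finrank F
        (Submodule.map (U.comap W.subtype).mkQ (C.comap W.subtype)) = k - r
      have := hdim _ hU'C
      rw [hCk'] at this
      omega
    · show Submodule.map (U.comap W.subtype).mkQ (C.comap W.subtype)
        ≤ B'.orthogonal (Submodule.map (U.comap W.subtype).mkQ (C.comap W.subtype))
      rintro x hx y hy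
      simp only [Submodule.mem_map] at hx hy
      obtain ⟨x', hx', rfl⟩ := hx
      obtain ⟨y', hy', rfl⟩ := hy
      rw [Submodule.mkQ_apply, Submodule.mkQ_apply]
      rw [hB']
      exact hCo hx' _ hy'
  constructor
  · -- InjOn
    rintro C₁ ⟨_, hUC₁, hCo₁⟩ C₂ ⟨_, hUC₂, hCo₂⟩ heq
    have hCW₁ : C₁ ≤ W := hWU C₁ hUC₁ hCo₁
    have hCW₂ : C₂ ≤ W := hWU C₂ hUC₂ hCo₂
    have hcomap : C₁.comap W.subtype = C₂.comap W.subtype := by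
      have h1 : Submodule.comap (U.comap W.subtype).mkQ
            (Submodule.map (U.comap W.subtype).mkQ (C₁.comap W.subtype))
          = Submodule.comap (U.comap W.subtype).mkQ
            (Submodule.map (U.comap W.subtype).mkQ (C₂.comap W.subtype)) := by
        simpa using congrArg (Submodule.comap (U.comap W.subtype).mkQ) heq
      rwa [Submodule.comap_map_eq, Submodule.comap_map_eq, Submodule.ker_mkQ,
        sup_eq_left.mpr (fun x hx => hUC₁ hx),
        sup_eq_left.mpr (fun x hx => hUC₂ hx)] at h1
    have := congrArg (Submodule.map W.subtype) hcomap
    rwa [Submodule.map_comap_subtype, Submodule.map_comap_subtype,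
      inf_eq_right.mpr hCW₁, inf_eq_right.mpr hCW₂] at this
  · -- SurjOn
    rintro D ⟨hDk, hDo⟩
    set C' : Submodule F W := Submodule.comap (U.comap W.subtype).mkQ D with hC'def
    have hU'C' : U.comap W.subtype ≤ C' := by
      rw [← Submodule.ker_mkQ (U.comap W.subtype)]
      exact LinearMap.ker_le_comap _
    have hCcomap : (Submodule.map W.subtype C').comap W.subtype = C' := by
      rw [Submodule.comap_map_eq, Submodule.ker_subtype, sup_bot_eq]
    have hmapD : Submodule.map (U.comap W.subtype).mkQ C' = D :=
      Submodule.map_comap_eq_of_surjective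
        (Submodule.mkQ_surjective (U.comap W.subtype)) D
    refine ⟨Submodule.map W.subtype C', ⟨?_, ?_, ?_⟩, ?_⟩
    · -- finrank = k
      have h1 : Module.finrank F (Submodule.map W.subtype C')
          = Module.finrank F C' := Submodule.finrank_map_subtype_eq W C'
      have h2 := hdim C' hU'C'
      rw [hmapD, hDk] at h2
      omega
    · -- U ≤ C
      intro x hx
      exact ⟨⟨x, hUW hx⟩, hU'C' hx, rfl⟩
    · -- self-orthogonal
      rintro x ⟨x', hx', rfl⟩ y ⟨y', hy', rfl⟩
      have h3 := hDo hx' (Submodule.Quotient.mk y')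
        (by rw [← hmapD]; exact Submodule.mem_map_of_mem hy')
      show (B (y' : V)) (x' : V) = 0
      rw [← hB' y' x']
      exact h3
    · -- image equals D
      show Submodule.map (U.comap W.subtype).mkQ
        ((Submodule.map W.subtype C').comap W.subtype) = D
      rw [hCcomap, hmapD]

theorem stmt6 {F V : Type*} [Field F] [Fintype F] [AddCommGroup V] [Module F V]
    [FiniteDimensional F V]
    (B : LinearMap.BilinForm F V) (hsymm : B.IsSymm) (hnd : B.Nondegenerate)
    (U : Submodule F V) (hU : U ≤ B.orthogonal U)
    (r k : ℕ) (hr : Module.finrank F U = r) (hk : r ≤ k)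
    (B' : LinearMap.BilinForm F
      ((B.orthogonal U) ⧸ (U.comap (B.orthogonal U).subtype)))
    (hB' : ∀ v w : B.orthogonal U,
      B' (Submodule.Quotient.mk v) (Submodule.Quotient.mk w) = B (v : V) (w : V)) :
    Set.BijOn
      (fun C : Submodule F V =>
        Submodule.map (U.comap (B.orthogonal U).subtype).mkQ
          (C.comap (B.orthogonal U).subtype))
      {C : Submodule F V | Module.finrank F C = k ∧ U ≤ C ∧ C ≤ B.orthogonal C}
      {D | Module.finrank F D = k - r ∧ D ≤ B'.orthogonal D} := by
  exact stmt6_aux B U (B.orthogonal U) hU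
    (fun C hUC hCo => hCo.trans (LinearMap.BilinForm.orthogonal_le hUC))
    r k hr hk B' hB'
end

section
/- Let q and n be even, and let B be the standard inner product on F_q^n. For any self-orthogonal subspace U ≤ F_q^n, the induced form B_U on U^⊥/U is alternating if and only if the all-one vector 1 belongs to U. -/
theorem stmt8 {F : Type*} [Field F] [Fintype F] (n : ℕ)
    (hq : Even (Fintype.card F)) (hn : Even n)
    (U : Submodule F (Fin n → F))
    (hU : ∀ u ∈ U, ∀ w ∈ U, ∑ i, u i * w i = 0) :
    (∀ v : Fin n → F, (∀ u ∈ U, ∑ i, v i * u i = 0) → ∑ i, v i * v i = 0) ↔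
      (fun _ : Fin n => (1 : F)) ∈ U := by
  -- characteristic 2
  set p := ringChar F with hpdef
  haveI hC : CharP F p := ringChar.charP F
  have hp : p.Prime := CharP.char_is_prime F p
  haveI : Fact p.Prime := ⟨hp⟩
  obtain ⟨k, -, hcard⟩ := FiniteField.card F p
  have hp2 : p = 2 := by
    rcases hq with ⟨m, hm⟩
    have h2 : 2 ∣ p ^ (k : ℕ) := by rw [← hcard, hm]; exact ⟨m, by ring⟩
    exact ((Nat.prime_dvd_prime_iff_eq Nat.prime_two hp).mp
      (Nat.Prime.dvd_of_dvd_pow Nat.prime_two h2)).symm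
  haveI : CharP F 2 := hp2 ▸ hC
  -- key: sum of squares equals square of sum
  have key : ∀ v : Fin n → F, (∑ i, v i * v i = 0) ↔ (∑ i, v i * 1 = 0) := by
    intro v
    have : ∑ i, v i * v i = (∑ i, v i) ^ 2 := by
      rw [sum_pow_char]; simp [sq]
    rw [this]
    simp [pow_eq_zero_iff]
  -- the standard bilinear form
  set B : LinearMap.BilinForm F (Fin n → F) := LinearMap.mk₂ F (fun v w => ∑ i, v i * w i)
    (fun v v' w => by simp [add_mul, Finset.sum_add_distrib])
    (fun c v w => by simp [Finset.mul_sum, mul_assoc])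
    (fun v w w' => by simp [mul_add, Finset.sum_add_distrib])
    (fun c v w => by simp [Finset.mul_sum]; ring_nf; simp [mul_comm, mul_left_comm])
    with hB
  have hBapp : ∀ v w, B v w = ∑ i, v i * w i := fun v w => rfl
  have hrefl : B.IsRefl := by
    intro v w h
    rw [hBapp] at h ⊢
    rw [← h]
    exact Finset.sum_congr rfl fun i _ => mul_comm _ _
  have hnd : B.Nondegenerate := by
    refine (LinearMap.IsRefl.nondegenerate_iff_separatingLeft hrefl).mpr ?_
    intro v hv
    funext j
    have := hv (Pi.single j 1)
    rw [hBapp] at this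
    simpa [Pi.single_apply, Finset.sum_ite_eq'] using this
  have hUorth : U = B.orthogonal (B.orthogonal U) :=
    (LinearMap.BilinForm.orthogonal_orthogonal hnd hrefl U).symm
  constructor
  · intro h
    rw [hUorth]
    intro v hv
    have hv' : ∀ u ∈ U, ∑ i, v i * u i = 0 := by
      intro u hu
      exact hrefl u v (hv u hu)
    have := (key v).mp (h v hv')
    show B v _ = 0
    rw [hBapp]
    exact this
  · intro h1 v hv
    exact (key v).mpr (hv _ h1)
end
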